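/- Let n be a positive integer and suppose an orientation of the n-cube has the property that every vertex has in-degree 0 or in-degree n. Then there is a fixed parity ε ∈ ZMod 2 such that every edge is oriented toward its endpoint of parity ε; in particular there are exactly two such orientations. -/

import Mathlib

/-- Flip coordinate `i` of a binary `n`-tuple. -/
def flipBit {n : ℕ} (v : Fin n → ZMod 2) (i : Fin n) : Fin n → ZMod 2 :=
  Function.update v i (v i + 1)

/-- An orientation of the `n`-cube: to each edge (a pair of vertices differing in
exactly one coordinate) we assign a head, one of its two endpoints.  The edge at
vertex `v` in direction `i` joins `v` and `flipBit v i`; `head v i` is the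
assigned head of that edge, which must be one of the endpoints and must not
depend on from which endpoint the edge is viewed. -/
structure CubeOrientation (n : ℕ) where
  head : (Fin n → ZMod 2) → Fin n → (Fin n → ZMod 2)
  head_mem : ∀ v i, head v i = v ∨ head v i = flipBit v i
  compatible : ∀ v i, head (flipBit v i) i = head v i

/-- The in-degree of a vertex `v`: the number of edges incident to `v`
whose head is `v`. -/
def CubeOrientation.inDeg {n : ℕ} (o : CubeOrientation n) (v : Fin n → ZMod 2) : ℕ :=
  (Finset.univ.filter fun i : Fin n => o.head v i = v).card

/-- The parity of a vertex: the sum of its coordinates modulo 2. -/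
def parity {n : ℕ} (v : Fin n → ZMod 2) : ZMod 2 := ∑ i, v i

lemma flip_ne {n : ℕ} (v : Fin n → ZMod 2) (i : Fin n) : flipBit v i ≠ v := by
  intro hh
  have := congrFun hh i
  simp [flipBit] at this

lemma flipBit_flipBit {n : ℕ} (v : Fin n → ZMod 2) (i : Fin n) : flipBit (flipBit v i) i = v := by
  funext j
  by_cases hj : j = i
  · subst hj
    simp [flipBit]
    ring_nf
    rw [show (2:ZMod 2) = 0 from by decide, zero_add]
  · simp [flipBit, Function.update_of_ne hj]

lemma parity_flip {n : ℕ} (v : Fin n → ZMod 2) (i : Fin n) :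
    parity (flipBit v i) = parity v + 1 := by
  unfold parity flipBit
  rw [← Finset.add_sum_erase _ _ (Finset.mem_univ i),
      ← Finset.add_sum_erase _ v (Finset.mem_univ i)]
  rw [Function.update_self]
  have : ∀ j ∈ Finset.univ.erase i, Function.update v i (v i + 1) j = v j := by
    intro j hj
    exact Function.update_of_ne (Finset.ne_of_mem_erase hj) _ _
  rw [Finset.sum_congr rfl this]
  ring

lemma zmod2_cases (a : ZMod 2) : a = 0 ∨ a = 1 := by revert a; decide

lemma zmod2_ne (a b : ZMod 2) (h : a ≠ b) : a = b + 1 := by revert a b; decide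

section Main
variable {n : ℕ} (o : CubeOrientation n)

lemma inDeg_eq_n (h : ∀ v, o.inDeg v = 0 ∨ o.inDeg v = n)
    {v i} (hv : o.head v i = v) : o.inDeg v = n := by
  rcases h v with h0 | h0
  · exfalso
    have hi : i ∈ Finset.univ.filter fun j => o.head v j = v := by simp [hv]
    have := Finset.card_pos.mpr ⟨i, hi⟩
    have : 0 < o.inDeg v := this
    omega
  · exact h0

lemma head_of_inDeg_n {v} (hv : o.inDeg v = n) (i : Fin n) : o.head v i = v := by
  have huniv : (Finset.univ.filter fun j => o.head v j = v) = Finset.univ := by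
    apply Finset.eq_univ_of_card
    simpa [CubeOrientation.inDeg] using hv
  have hmem : i ∈ Finset.filter (fun j => o.head v j = v) Finset.univ := by
    rw [huniv]; exact Finset.mem_univ i
  exact (Finset.mem_filter.mp hmem).2

lemma head_of_inDeg_0 {v} (hv : o.inDeg v = 0) (i : Fin n) : o.head v i = flipBit v i := by
  rcases o.head_mem v i with hh | hh
  · exfalso
    have hi : i ∈ Finset.univ.filter fun j => o.head v j = v := by simp [hh]
    have := Finset.card_pos.mpr ⟨i, hi⟩
    have : 0 < o.inDeg v := this
    omega
  · exact hh

lemma alternation (h : ∀ v, o.inDeg v = 0 ∨ o.inDeg v = n) (v : Fin n → ZMod 2) (i : Fin n) :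
    o.inDeg v = n ↔ ¬ o.inDeg (flipBit v i) = n := by
  constructor
  · intro hv hw
    have h1 : o.head v i = v := head_of_inDeg_n o hv i
    have h2 : o.head (flipBit v i) i = flipBit v i := head_of_inDeg_n o hw i
    rw [o.compatible v i, h1] at h2
    exact flip_ne v i h2.symm
  · intro hw
    have hv0 : o.inDeg (flipBit v i) = 0 := (h _).resolve_right hw
    have h1 : o.head (flipBit v i) i = flipBit (flipBit v i) i := head_of_inDeg_0 o hv0 i
    rw [o.compatible v i, flipBit_flipBit] at h1
    exact inDeg_eq_n o h h1

noncomputable def gfun (v : Fin n → ZMod 2) : ZMod 2 :=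
  (if o.inDeg v = n then (0 : ZMod 2) else 1) + parity v

lemma gfun_flip (h : ∀ v, o.inDeg v = 0 ∨ o.inDeg v = n) (v : Fin n → ZMod 2) (i : Fin n) :
    gfun o (flipBit v i) = gfun o v := by
  unfold gfun
  rw [parity_flip]
  by_cases hv : o.inDeg v = n
  · rw [if_pos hv, if_neg (((alternation o h v i).mp hv))]
    generalize parity v = p
    revert p; decide
  · rw [if_neg hv, if_pos (by
      by_contra hw
      exact hv ((alternation o h v i).mpr hw))]
    generalize parity v = p
    revert p; decide

lemma gfun_const (h : ∀ v, o.inDeg v = 0 ∨ o.inDeg v = n) :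
    ∀ (k : ℕ) (v : Fin n → ZMod 2),
      (Finset.univ.filter fun i => v i ≠ 0).card = k → gfun o v = gfun o 0 := by
  intro k
  induction k with
  | zero =>
    intro v hv
    have : v = 0 := by
      funext j
      simp only [Pi.zero_apply]
      have := Finset.card_eq_zero.mp hv
      by_contra hj
      have : j ∈ Finset.univ.filter fun i => v i ≠ 0 := by simp [hj]
      simp_all
    rw [this]
  | succ k ih =>
    intro v hv
    have hne : (Finset.univ.filter fun i => v i ≠ 0).Nonempty := by
      rw [← Finset.card_pos, hv]; omega
    obtain ⟨i, hi⟩ := hne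
    have hvi : v i = 1 := by
      have := (Finset.mem_filter.mp hi).2
      rcases zmod2_cases (v i) with h0 | h0 <;> simp_all
    have hsupp : (Finset.univ.filter fun j => flipBit v i j ≠ 0)
        = (Finset.univ.filter fun j => v j ≠ 0).erase i := by
      ext j
      by_cases hj : j = i
      · subst hj
        simp [flipBit, hvi, show (1:ZMod 2)+1 = 0 from by decide]
      · rw [Finset.mem_filter, Finset.mem_erase, Finset.mem_filter]
        simp [flipBit, Function.update_of_ne hj, hj]
    have hcard : (Finset.univ.filter fun j => flipBit v i j ≠ 0).card = k := by
      rw [hsupp, Finset.card_erase_of_mem hi, hv]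
      omega
    have := ih (flipBit v i) hcard
    rw [← gfun_flip o h v i]
    exact this

lemma inDeg_iff (h : ∀ v, o.inDeg v = 0 ∨ o.inDeg v = n) (v : Fin n → ZMod 2) :
    o.inDeg v = n ↔ parity v = gfun o 0 := by
  have hg : gfun o v = gfun o 0 := gfun_const o h _ v rfl
  by_cases hv : o.inDeg v = n
  · have hpv : parity v = gfun o 0 := by
      rw [← hg]; unfold gfun; rw [if_pos hv, zero_add]
    simp [hv, hpv]
  · simp only [hv, false_iff]
    intro hp
    have hgv : gfun o v = 1 + parity v := by unfold gfun; rw [if_neg hv]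
    rw [hgv, hp] at hg
    nth_rewrite 2 [← zero_add (gfun o 0)] at hg
    exact one_ne_zero (add_right_cancel hg)

lemma key (h : ∀ v, o.inDeg v = 0 ∨ o.inDeg v = n) (v : Fin n → ZMod 2) (i : Fin n) :
    parity (o.head v i) = gfun o 0 := by
  rcases o.head_mem v i with hh | hh
  · rw [hh]
    exact (inDeg_iff o h v).mp (inDeg_eq_n o h hh)
  · rw [hh]
    apply (inDeg_iff o h (flipBit v i)).mp
    apply inDeg_eq_n o h (i := i)
    rw [o.compatible v i, hh]

end Main

lemma zadd1 : ∀ p : ZMod 2, p + 1 ≠ p := by decide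

lemma zadd11 : ∀ p : ZMod 2, p + 1 + 1 = p := by decide

def oEps (n : ℕ) (ε : ZMod 2) : CubeOrientation n where
  head v i := if parity v = ε then v else flipBit v i
  head_mem v i := by (try dsimp only); split_ifs <;> simp
  compatible v i := by
    try dsimp only
    by_cases hv : parity v = ε
    · have h1 : ¬ parity (flipBit v i) = ε := by
        rw [parity_flip, hv]; exact zadd1 ε
      rw [if_pos hv, if_neg h1, flipBit_flipBit]
    · have h1 : parity (flipBit v i) = ε := by
        rw [parity_flip, zmod2_ne _ _ hv, zadd11]
      rw [if_neg hv, if_pos h1]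

lemma CubeOrientation.ext' {n : ℕ} {a b : CubeOrientation n} (h : a.head = b.head) : a = b := by
  cases a; cases b; cases h; rfl

lemma oEps_inDeg (n : ℕ) (ε : ZMod 2) (v : Fin n → ZMod 2) :
    (oEps n ε).inDeg v = if parity v = ε then n else 0 := by
  unfold CubeOrientation.inDeg oEps
  by_cases hv : parity v = ε
  · simp [hv]
  · simp [hv, flip_ne]

lemma parity_zero {n : ℕ} : parity (0 : Fin n → ZMod 2) = 0 := by simp [parity]

lemma oEps_ne (n : ℕ) (hn : 0 < n) : oEps n 0 ≠ oEps n 1 := by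
  intro he
  have := congrArg (fun o : CubeOrientation n => o.head 0 ⟨0, hn⟩) he
  dsimp [oEps] at this
  rw [if_pos parity_zero, if_neg (by rw [parity_zero]; decide)] at this
  exact flip_ne _ _ this.symm

theorem checkerboard_essentially_unique (n : ℕ) (hn : 0 < n) (o : CubeOrientation n)
    (h : ∀ v, o.inDeg v = 0 ∨ o.inDeg v = n) :
    (∃ ε : ZMod 2, ∀ v i, parity (o.head v i) = ε) ∧
      ∃ o₁ o₂ : CubeOrientation n, o₁ ≠ o₂ ∧
        ∀ o' : CubeOrientation n,
          (∀ v, o'.inDeg v = 0 ∨ o'.inDeg v = n) ↔ (o' = o₁ ∨ o' = o₂) := by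
  constructor
  · exact ⟨gfun o 0, key o h⟩
  · refine ⟨oEps n 0, oEps n 1, oEps_ne n hn, ?_⟩
    intro o'
    constructor
    · intro h'
      have ho : o' = oEps n (gfun o' 0) := by
        apply CubeOrientation.ext'
        funext v i
        show o'.head v i = if parity v = gfun o' 0 then v else flipBit v i
        by_cases hv : parity v = gfun o' 0
        · rw [if_pos hv]
          rcases o'.head_mem v i with hh | hh
          · exact hh
          · exfalso
            have hk := key o' h' v i
            rw [hh, parity_flip, hv] at hk
            exact zadd1 _ hk
        · rw [if_neg hv]
          rcases o'.head_mem v i with hh | hh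
          · exfalso
            have hk := key o' h' v i
            rw [hh] at hk
            exact hv hk
          · exact hh
      rcases zmod2_cases (gfun o' 0) with he | he
      · left; rw [ho, he]
      · right; rw [ho, he]
    · rintro (rfl | rfl) <;> intro v <;> rw [oEps_inDeg] <;> split
      · right; rfl
      · left; rfl
      · right; rfl
      · left; rfl
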